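/- Let 0 < α ≤ 1, let s be a positive integer with √s > α, and let k ≥ 4α²/(√s − α)² be such that ks is a positive integer. Let b = Ax + z with ‖z‖₁ ≤ η₁. Suppose A ∈ ℝ^{m×n} has (ℓ₂,ℓ₁)-RIP constants satisfying δ_{ks}^{ub} + (√k/2)·δ_{(k+1)s}^{lb} < √k/2 − 1, and let x̂ satisfy ‖b − A x̂‖₁ ≤ η₁ and ‖x̂‖₁ − α‖x̂‖₂ ≤ ‖x‖₁ − α‖x‖₂. Then ‖x̂ − x‖₂ ≤ [2(2√k + 1)√s / ((2√(ks) − α)·ρ̃_{ks})]·η₁ + [√s/(2√(ks) − α)]·[(2√k + 1)(1 + δ_{ks}^{ub})√s/(ρ̃_{ks}(√(ks) − α)) + 1]·(2‖x_{-max(s)}‖₁/√s), where ρ̃_{ks} = 1 − δ_{(k+1)s}^{lb} − (1 + δ_{ks}^{ub})/(√k/2). -/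

import Mathlib

open Finset

/-- The ℓ₁ norm of a vector in `ℝⁿ`. -/
noncomputable def l1norm {n : ℕ} (x : Fin n → ℝ) : ℝ := ∑ i, |x i|

/-- The ℓ₂ norm of a vector in `ℝⁿ`. -/
noncomputable def l2norm {n : ℕ} (x : Fin n → ℝ) : ℝ := Real.sqrt (∑ i, (x i) ^ 2)

/-- The restriction `x_S` of a vector `x` to an index set `S` (equal to `x` on `S`, zero
outside `S`). -/
def restr {n : ℕ} (x : Fin n → ℝ) (S : Finset (Fin n)) : Fin n → ℝ :=
  fun i => if i ∈ S then x i else 0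

/-- `T` is an index set of the `s` largest-magnitude entries of `x` among the indices in `S`. -/
def IsMaxIdxOn {n : ℕ} (x : Fin n → ℝ) (s : ℕ) (T S : Finset (Fin n)) : Prop :=
  T ⊆ S ∧ T.card = s ∧ ∀ i ∈ T, ∀ j ∈ S \ T, |x j| ≤ |x i|

/-- `T` is an index set of the `s` largest-magnitude entries of `x`. -/
def IsMaxIdx {n : ℕ} (x : Fin n → ℝ) (s : ℕ) (T : Finset (Fin n)) : Prop :=
  IsMaxIdxOn x s T Finset.univ

/-- A vector is `r`-sparse: it has at most `r` nonzero entries. -/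
def Sparse {n : ℕ} (r : ℕ) (v : Fin n → ℝ) : Prop :=
  ∃ S : Finset (Fin n), S.card ≤ r ∧ ∀ i ∉ S, v i = 0

section helpers
variable {n m : ℕ}

lemma l1norm_nonneg (x : Fin n → ℝ) : 0 ≤ l1norm x :=
  Finset.sum_nonneg fun i _ => abs_nonneg _

lemma l2norm_nonneg (x : Fin n → ℝ) : 0 ≤ l2norm x := Real.sqrt_nonneg _

lemma l2norm_sq (x : Fin n → ℝ) : (l2norm x) ^ 2 = ∑ i, (x i) ^ 2 :=
  Real.sq_sqrt (Finset.sum_nonneg fun i _ => sq_nonneg _)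

lemma l1norm_add_le (x y : Fin n → ℝ) : l1norm (x + y) ≤ l1norm x + l1norm y := by
  unfold l1norm
  rw [← Finset.sum_add_distrib]
  exact Finset.sum_le_sum fun i _ => abs_add_le _ _

lemma l2norm_eq (v : Fin n → ℝ) : l2norm v = ‖(WithLp.equiv 2 (Fin n → ℝ)).symm v‖ := by
  rw [EuclideanSpace.norm_eq]
  unfold l2norm
  congr 1
  refine Finset.sum_congr rfl fun i _ => ?_
  show v i ^ 2 = ‖v i‖ ^ 2
  rw [Real.norm_eq_abs, sq_abs]

lemma l2norm_add_le (x y : Fin n → ℝ) : l2norm (x + y) ≤ l2norm x + l2norm y := by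
  rw [l2norm_eq, l2norm_eq, l2norm_eq]
  exact norm_add_le ((WithLp.equiv 2 (Fin n → ℝ)).symm x) ((WithLp.equiv 2 (Fin n → ℝ)).symm y)

lemma l1norm_restr (u : Fin n → ℝ) (S : Finset (Fin n)) :
    l1norm (restr u S) = ∑ i ∈ S, |u i| := by
  unfold l1norm restr
  rw [← Finset.sum_subset (Finset.subset_univ S)]
  · exact Finset.sum_congr rfl fun i hi => by simp [hi]
  · intro i _ hi; simp [hi]

lemma l2norm_restr_eq (u : Fin n → ℝ) (S : Finset (Fin n)) :
    l2norm (restr u S) = Real.sqrt (∑ i ∈ S, (u i) ^ 2) := by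
  unfold l2norm restr
  congr 1
  rw [← Finset.sum_subset (Finset.subset_univ S)]
  · exact Finset.sum_congr rfl fun i hi => by simp [hi]
  · intro i _ hi; simp [hi]

lemma l2norm_sq_restr (u : Fin n → ℝ) (S : Finset (Fin n)) :
    (l2norm (restr u S)) ^ 2 = ∑ i ∈ S, (u i) ^ 2 := by
  rw [l2norm_restr_eq, Real.sq_sqrt (Finset.sum_nonneg fun i _ => sq_nonneg _)]

lemma restr_split (u : Fin n → ℝ) {S₁ S : Finset (Fin n)} (h : S₁ ⊆ S) :
    restr u S = restr u S₁ + restr u (S \ S₁) := by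
  funext i
  by_cases h1 : i ∈ S₁
  · simp [restr, h1, h h1, Finset.mem_sdiff]
  · by_cases h2 : i ∈ S <;> simp [restr, h1, h2, Finset.mem_sdiff]

lemma restr_univ (u : Fin n → ℝ) : restr u Finset.univ = u := by
  funext i; simp [restr]

lemma sparse_restr (u : Fin n → ℝ) {S : Finset (Fin n)} {r : ℕ} (h : S.card ≤ r) :
    Sparse r (restr u S) :=
  ⟨S, h, fun i hi => by simp [restr, hi]⟩

lemma l1norm_restr_split (u : Fin n → ℝ) {S₁ S : Finset (Fin n)} (h : S₁ ⊆ S) :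
    l1norm (restr u S) = l1norm (restr u S₁) + l1norm (restr u (S \ S₁)) := by
  rw [l1norm_restr, l1norm_restr, l1norm_restr, add_comm, Finset.sum_sdiff h]

lemma l1_le_sqrt_card_mul_l2 (u : Fin n → ℝ) (S : Finset (Fin n)) :
    l1norm (restr u S) ≤ Real.sqrt S.card * l2norm (restr u S) := by
  have hcs := Finset.sum_mul_sq_le_sq_mul_sq S (fun _ => (1:ℝ)) (fun i => |u i|)
  simp only [one_pow, one_mul, Finset.sum_const, nsmul_eq_mul, mul_one, sq_abs] at hcs
  rw [l1norm_restr]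
  have h1 : (0:ℝ) ≤ ∑ i ∈ S, |u i| := Finset.sum_nonneg fun i _ => abs_nonneg _
  have h2 : ∑ i ∈ S, |u i| = Real.sqrt ((∑ i ∈ S, |u i|) ^ 2) := (Real.sqrt_sq h1).symm
  rw [h2]
  calc Real.sqrt ((∑ i ∈ S, |u i|) ^ 2) ≤ Real.sqrt ((S.card : ℝ) * ∑ i ∈ S, (u i) ^ 2) :=
        Real.sqrt_le_sqrt hcs
    _ = Real.sqrt S.card * l2norm (restr u S) := by
        rw [Real.sqrt_mul (Nat.cast_nonneg _), l2norm_restr_eq]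

lemma l2_restr_mono (u : Fin n → ℝ) {S B : Finset (Fin n)} (h : S ⊆ B) :
    l2norm (restr u S) ≤ l2norm (restr u B) := by
  have := Finset.sum_le_sum_of_subset_of_nonneg h (fun i _ _ => sq_nonneg (u i))
  rw [l2norm_restr_eq, l2norm_restr_eq]
  exact Real.sqrt_le_sqrt this

lemma exists_isMaxIdxOn (x : Fin n → ℝ) (S : Finset (Fin n)) :
    ∀ r : ℕ, r ≤ S.card → ∃ T, IsMaxIdxOn x r T S := by
  intro r
  induction r with
  | zero => exact fun _ => ⟨∅, Finset.empty_subset _, Finset.card_empty, by simp⟩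
  | succ r ih =>
    intro hr
    obtain ⟨T, hTS, hTcard, hTmax⟩ := ih (Nat.le_of_succ_le hr)
    have hne : (S \ T).Nonempty := by
      rw [← Finset.card_pos, Finset.card_sdiff_of_subset hTS, hTcard]
      omega
    obtain ⟨j, hj, hjmax⟩ := Finset.exists_max_image (S \ T) (fun i => |x i|) hne
    have hjT : j ∉ T := (Finset.mem_sdiff.1 hj).2
    refine ⟨insert j T, ?_, ?_, ?_⟩
    · exact Finset.insert_subset (Finset.mem_sdiff.1 hj).1 hTS
    · rw [Finset.card_insert_of_notMem hjT, hTcard]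
    · intro i hi l hl
      have hlT : l ∈ S \ T := by
        rw [Finset.mem_sdiff] at hl ⊢
        exact ⟨hl.1, fun h => hl.2 (Finset.mem_insert_of_mem h)⟩
      rcases Finset.mem_insert.1 hi with rfl | hi
      · exact hjmax l hlT
      · exact hTmax i hi l hlT
end helpers

section tail
variable {n m : ℕ}

lemma l2_restr_le_sqrt_mul {ks : ℕ} (u : Fin n → ℝ) {S : Finset (Fin n)} {lam : ℝ}
    (hlam0 : 0 ≤ lam) (hlam : ∀ i ∈ S, |u i| ≤ lam) (hcard : S.card ≤ ks) :
    l2norm (restr u S) ≤ Real.sqrt ks * lam := by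
  rw [l2norm_restr_eq]
  have h1 : ∑ i ∈ S, (u i) ^ 2 ≤ (ks : ℝ) * lam ^ 2 := by
    calc ∑ i ∈ S, (u i) ^ 2 ≤ ∑ _i ∈ S, lam ^ 2 := by
          refine Finset.sum_le_sum fun i hi => ?_
          have := hlam i hi
          nlinarith [abs_nonneg (u i), sq_abs (u i)]
      _ = (S.card : ℝ) * lam ^ 2 := by rw [Finset.sum_const, nsmul_eq_mul]
      _ ≤ (ks : ℝ) * lam ^ 2 := by
          have : (S.card : ℝ) ≤ (ks : ℝ) := Nat.cast_le.2 hcard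
          nlinarith [sq_nonneg lam]
  calc Real.sqrt (∑ i ∈ S, (u i) ^ 2) ≤ Real.sqrt ((ks : ℝ) * lam ^ 2) :=
        Real.sqrt_le_sqrt h1
    _ = Real.sqrt ks * lam := by
        rw [Real.sqrt_mul (Nat.cast_nonneg _), Real.sqrt_sq hlam0]

lemma tail_bound (A : Matrix (Fin m) (Fin n) ℝ) (δub : ℝ) (ks : ℕ) (hks : 0 < ks)
    (hδub : 0 ≤ δub)
    (hRIPub : ∀ v : Fin n → ℝ, Sparse ks v → l1norm (A.mulVec v) ≤ (1 + δub) * l2norm v)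
    (u : Fin n → ℝ) :
    ∀ N : ℕ, ∀ S : Finset (Fin n), S.card ≤ N → ∀ lam : ℝ, 0 ≤ lam →
      (∀ i ∈ S, |u i| ≤ lam) →
      l1norm (A.mulVec (restr u S)) ≤
        (1 + δub) * (l1norm (restr u S) / Real.sqrt ks + Real.sqrt ks * lam) := by
  have hkspos : (0:ℝ) < Real.sqrt ks := Real.sqrt_pos.2 (by exact_mod_cast hks)
  have hC : (0:ℝ) ≤ 1 + δub := by linarith
  intro N
  induction N with
  | zero =>
    intro S hS lam hlam0 hlam
    have hS0 : S = ∅ := Finset.card_eq_zero.mp (Nat.le_zero.mp hS)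
    subst hS0
    have : restr u (∅ : Finset (Fin n)) = 0 := by funext i; simp [restr]
    rw [this, Matrix.mulVec_zero]
    have h0 : l1norm (0 : Fin m → ℝ) = 0 := by unfold l1norm; simp
    have h0' : l1norm (restr u (∅ : Finset (Fin n))) = 0 := by
      rw [this]; unfold l1norm; simp
    have h00 : l1norm (0 : Fin n → ℝ) = 0 := by unfold l1norm; simp
    rw [h0, h00]
    positivity
  | succ N ih =>
    intro S hS lam hlam0 hlam
    by_cases hSks : S.card ≤ ks
    · -- direct RIP
      have h1 := hRIPub (restr u S) (sparse_restr u hSks)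
      have h2 := l2_restr_le_sqrt_mul u hlam0 hlam hSks
      have h3 : 0 ≤ l1norm (restr u S) / Real.sqrt ks :=
        div_nonneg (l1norm_nonneg _) (le_of_lt hkspos)
      nlinarith
    · push_neg at hSks
      obtain ⟨S₁, hS₁S, hS₁card, hS₁max⟩ := exists_isMaxIdxOn u S ks (le_of_lt hSks)
      have hS₁ne : S₁.Nonempty := by
        rw [← Finset.card_pos, hS₁card]; exact hks
      obtain ⟨i₀, hi₀, hi₀min⟩ := Finset.exists_min_image S₁ (fun i => |u i|) hS₁ne
      set lam' := |u i₀| with hlam'def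
      have hlam'0 : 0 ≤ lam' := abs_nonneg _
      have hrest : ∀ i ∈ S \ S₁, |u i| ≤ lam' := fun i hi => hS₁max i₀ hi₀ i hi
      have hcard' : (S \ S₁).card ≤ N := by
        rw [Finset.card_sdiff_of_subset hS₁S, hS₁card]
        omega
      have hIH := ih (S \ S₁) hcard' lam' hlam'0 hrest
      -- RIP on S₁
      have h1 := hRIPub (restr u S₁) (sparse_restr u (le_of_eq hS₁card))
      have h2 : l2norm (restr u S₁) ≤ Real.sqrt ks * lam :=
        l2_restr_le_sqrt_mul u hlam0 (fun i hi => hlam i (hS₁S hi)) (le_of_eq hS₁card)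
      -- √ks * lam' ≤ l1norm (restr u S₁) / √ks
      have h3 : Real.sqrt ks * lam' ≤ l1norm (restr u S₁) / Real.sqrt ks := by
        rw [le_div_iff₀ hkspos]
        have : (ks : ℝ) * lam' ≤ l1norm (restr u S₁) := by
          rw [l1norm_restr]
          calc (ks : ℝ) * lam' = ∑ _i ∈ S₁, lam' := by
                rw [Finset.sum_const, nsmul_eq_mul, hS₁card]
            _ ≤ ∑ i ∈ S₁, |u i| := Finset.sum_le_sum fun i hi => hi₀min i hi
        calc Real.sqrt ks * lam' * Real.sqrt ks = (ks : ℝ) * lam' := by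
              rw [mul_comm (Real.sqrt ks) lam', mul_assoc,
                Real.mul_self_sqrt (Nat.cast_nonneg _), mul_comm]
          _ ≤ l1norm (restr u S₁) := this
      -- split
      have hsplit : l1norm (A.mulVec (restr u S)) ≤
          l1norm (A.mulVec (restr u S₁)) + l1norm (A.mulVec (restr u (S \ S₁))) := by
        rw [restr_split u hS₁S, Matrix.mulVec_add]
        exact l1norm_add_le _ _
      have hl1split := l1norm_restr_split u hS₁S
      have hdiv : l1norm (restr u S) / Real.sqrt ks =
          l1norm (restr u S₁) / Real.sqrt ks + l1norm (restr u (S \ S₁)) / Real.sqrt ks := by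
        rw [hl1split, add_div]
      have hmul : (1 + δub) * (l1norm (restr u (S \ S₁)) / Real.sqrt ks + Real.sqrt ks * lam')
          ≤ (1 + δub) * (l1norm (restr u (S \ S₁)) / Real.sqrt ks
              + l1norm (restr u S₁) / Real.sqrt ks) :=
        mul_le_mul_of_nonneg_left (by linarith) hC
      nlinarith
end tail

section more
variable {n m : ℕ}

lemma l1norm_neg (x : Fin n → ℝ) : l1norm (-x) = l1norm x := by
  unfold l1norm; simp

lemma l1norm_sub_le (x y : Fin n → ℝ) : l1norm (x - y) ≤ l1norm x + l1norm y := by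
  have := l1norm_add_le x (-y)
  rwa [← sub_eq_add_neg, l1norm_neg] at this

lemma l1norm_split_compl (u : Fin n → ℝ) (T : Finset (Fin n)) :
    l1norm u = l1norm (restr u T) + l1norm (restr u Tᶜ) := by
  conv_lhs => rw [← restr_univ u]
  rw [l1norm_restr_split u (Finset.subset_univ T), Finset.compl_eq_univ_sdiff]
end more

set_option maxHeartbeats 4000000 in
/-- stable recovery via `ℓ₁ − αℓ₂`-LAD, simpler RIP condition.
Let `0 < α ≤ 1`, `s` a positive integer with `√s > α`, and `k ≥ 4α²/(√s − α)²` such that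
`ks ∈ ℤ₊`.  Let `b = Ax + z` with `‖z‖₁ ≤ η₁`.  If the (ℓ₂,ℓ₁)-RIP constants of `A` satisfy
`δ_{ks}^{ub} + (√k/2)·δ_{(k+1)s}^{lb} < √k/2 − 1` and `x̂` satisfies `‖b − Ax̂‖₁ ≤ η₁` and
`‖x̂‖₁ − α‖x̂‖₂ ≤ ‖x‖₁ − α‖x‖₂`, then with
`ρ̃ = 1 − δ_{(k+1)s}^{lb} − (1 + δ_{ks}^{ub})/(√k/2)`:
`‖x̂ − x‖₂ ≤ [2(2√k + 1)√s/((2√(ks) − α)ρ̃)]·η₁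
  + [√s/(2√(ks) − α)]·[(2√k + 1)(1 + δ_{ks}^{ub})√s/(ρ̃(√(ks) − α)) + 1]·(2‖x₋ₘₐₓ₍ₛ₎‖₁/√s)`. -/
theorem stmt8 {n m : ℕ} (α : ℝ) (hα0 : 0 < α) (hα1 : α ≤ 1)
    (s : ℕ) (hs : 0 < s) (hαs : α < Real.sqrt s)
    (k : ℝ) (hk : 4 * α ^ 2 / (Real.sqrt s - α) ^ 2 ≤ k)
    (ks : ℕ) (hks : 0 < ks) (hksk : (ks : ℝ) = k * s)
    (A : Matrix (Fin m) (Fin n) ℝ) (δlb δub : ℝ) (hδlb : 0 ≤ δlb) (hδub : 0 ≤ δub)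
    (hRIPlb : ∀ v : Fin n → ℝ, Sparse (ks + s) v →
      (1 - δlb) * l2norm v ≤ l1norm (A.mulVec v))
    (hRIPub : ∀ v : Fin n → ℝ, Sparse ks v →
      l1norm (A.mulVec v) ≤ (1 + δub) * l2norm v)
    (hcond : δub + (Real.sqrt k / 2) * δlb < Real.sqrt k / 2 - 1)
    (x : Fin n → ℝ) (z : Fin m → ℝ) (η₁ : ℝ) (hz : l1norm z ≤ η₁)
    (b : Fin m → ℝ) (hb : b = A.mulVec x + z)
    (xhat : Fin n → ℝ) (hfeas : l1norm (b - A.mulVec xhat) ≤ η₁)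
    (hmin : l1norm xhat - α * l2norm xhat ≤ l1norm x - α * l2norm x)
    (Tx : Finset (Fin n)) (hTx : IsMaxIdx x s Tx)
    (ρ : ℝ) (hρ : ρ = 1 - δlb - (1 + δub) / (Real.sqrt k / 2)) :
    l2norm (xhat - x) ≤
      2 * (2 * Real.sqrt k + 1) * Real.sqrt s /
          ((2 * Real.sqrt (ks : ℝ) - α) * ρ) * η₁ +
      Real.sqrt s / (2 * Real.sqrt (ks : ℝ) - α) *
          ((2 * Real.sqrt k + 1) * (1 + δub) * Real.sqrt s /
              (ρ * (Real.sqrt (ks : ℝ) - α)) + 1) *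
          (2 * l1norm (restr x Txᶜ) / Real.sqrt s) := by
  obtain ⟨-, hTcard, -⟩ := hTx
  set St := Real.sqrt s with hSt
  set Kt := Real.sqrt k with hKt
  set Tt := Real.sqrt (ks : ℝ) with hTt
  set h := xhat - x with hh
  set ε := 2 * l1norm (restr x Txᶜ) with hε
  -- basic positivity
  have hk0 : (0:ℝ) ≤ k := le_trans (by positivity) hk
  have hSt0 : 0 < St := lt_trans hα0 hαs
  have hKt0 : 0 ≤ Kt := Real.sqrt_nonneg _
  have httks : Tt = Kt * St := by rw [hTt, hksk, hKt, hSt, Real.sqrt_mul hk0]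
  have hKt2 : 2 < Kt := by
    have h1 : 0 ≤ Kt / 2 * δlb := mul_nonneg (by linarith) hδlb
    linarith only [hcond, hδub, h1]
  have hTt0 : 0 < Tt := by rw [httks]; exact mul_pos (by linarith) hSt0
  have hTtα : α < Tt := by
    rw [httks]
    have h1 : 1 * St < Kt * St := mul_lt_mul_of_pos_right (by linarith) hSt0
    linarith only [hαs, h1]
  have hTtα0 : 0 < Tt - α := by linarith
  have h2Ttα0 : 0 < 2 * Tt - α := by linarith
  have hρKt : ρ * Kt = Kt * (1 - δlb) - 2 * (1 + δub) := by
    rw [hρ]; field_simp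
  have hρ0 : 0 < ρ := by
    have hKtpos : (0:ℝ) < Kt := by linarith
    have h1 : 0 < ρ * Kt := by rw [hρKt]; linarith only [hcond]
    have h2 := div_pos h1 hKtpos
    rwa [mul_div_cancel_right₀ _ (ne_of_gt hKtpos)] at h2
  have hαk : α * (Kt + 2) ≤ Kt * St := by
    have hd : 0 < St - α := by linarith
    have h4 : 4 * α ^ 2 ≤ k * (St - α) ^ 2 := by
      calc 4 * α ^ 2 = 4 * α ^ 2 / (St - α) ^ 2 * (St - α) ^ 2 := by field_simp
        _ ≤ k * (St - α) ^ 2 := mul_le_mul_of_nonneg_right hk (sq_nonneg _)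
    have h2α : 2 * α ≤ Kt * (St - α) := by
      have e1 : Real.sqrt (4 * α ^ 2) = 2 * α := by
        rw [show 4 * α ^ 2 = (2 * α) ^ 2 by ring, Real.sqrt_sq (by linarith)]
      have e2 : Real.sqrt (k * (St - α) ^ 2) = Kt * (St - α) := by
        rw [Real.sqrt_mul hk0, Real.sqrt_sq hd.le, hKt]
      rw [← e1, ← e2]
      exact Real.sqrt_le_sqrt h4
    linarith only [h2α]
  have hη0 : 0 ≤ η₁ := le_trans (l1norm_nonneg z) hz
  have hε0 : 0 ≤ ε := by rw [hε]; have := l1norm_nonneg (restr x Txᶜ); linarith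
  -- (I) tube constraint
  have hAh : l1norm (A.mulVec h) ≤ 2 * η₁ := by
    have e : A.mulVec h = z - (b - A.mulVec xhat) := by
      rw [hh, Matrix.mulVec_sub, hb]; abel
    rw [e]
    calc l1norm (z - (b - A.mulVec xhat)) ≤ l1norm z + l1norm (b - A.mulVec xhat) :=
          l1norm_sub_le _ _
      _ ≤ η₁ + η₁ := add_le_add hz hfeas
      _ = 2 * η₁ := by ring
  -- (II) cone constraint
  have hxh : xhat = x + h := by rw [hh]; abel
  have hcone : l1norm (restr h Txᶜ) ≤ l1norm (restr h Tx) + ε + α * l2norm h := by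
    have hpt : ∀ i, xhat i = x i + h i := fun i => by rw [hxh]; rfl
    have hT1 : l1norm (restr x Tx) - l1norm (restr h Tx) ≤ l1norm (restr xhat Tx) := by
      rw [l1norm_restr, l1norm_restr, l1norm_restr, ← Finset.sum_sub_distrib]
      refine Finset.sum_le_sum fun i _ => ?_
      rw [hpt i]
      have h2 : |x i| ≤ |x i + h i| + |h i| := by
        calc |x i| = |x i + h i + -h i| := by ring_nf
          _ ≤ |x i + h i| + |(-(h i))| := abs_add_le _ _
          _ = |x i + h i| + |h i| := by rw [abs_neg]
      linarith
    have hT2 : l1norm (restr h Txᶜ) - l1norm (restr x Txᶜ) ≤ l1norm (restr xhat Txᶜ) := by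
      rw [l1norm_restr, l1norm_restr, l1norm_restr, ← Finset.sum_sub_distrib]
      refine Finset.sum_le_sum fun i _ => ?_
      rw [hpt i]
      have h2 : |h i| ≤ |x i + h i| + |x i| := by
        calc |h i| = |x i + h i + -x i| := by ring_nf
          _ ≤ |x i + h i| + |(-(x i))| := abs_add_le _ _
          _ = |x i + h i| + |x i| := by rw [abs_neg]
      linarith
    have hsx : l1norm xhat = l1norm (restr xhat Tx) + l1norm (restr xhat Txᶜ) :=
      l1norm_split_compl xhat Tx
    have hsx2 : l1norm x = l1norm (restr x Tx) + l1norm (restr x Txᶜ) :=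
      l1norm_split_compl x Tx
    have hl2 : l2norm xhat ≤ l2norm x + l2norm h := by
      rw [hxh]; exact l2norm_add_le x h
    have hαl2 : α * l2norm xhat - α * l2norm x ≤ α * l2norm h := by
      have h' : l2norm xhat - l2norm x ≤ l2norm h := by linarith only [hl2]
      have h'' := mul_le_mul_of_nonneg_left h' hα0.le
      linarith only [h'']
    rw [hε]; linarith only [hmin, hT1, hT2, hsx, hsx2, hαl2]
  -- (III) choose T₁
  obtain ⟨T₁, hT₁sub, hT₁card, hT₁max⟩ :=
    exists_isMaxIdxOn h Txᶜ (min ks Txᶜ.card) (min_le_right _ _)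
  have hT₁ks : T₁.card ≤ ks := by rw [hT₁card]; exact min_le_left _ _
  set B := Tx ∪ T₁ with hBdef
  set R := Txᶜ \ T₁ with hRdef
  have hBc : Bᶜ = R := by
    ext i
    simp only [hBdef, hRdef, Finset.mem_compl, Finset.mem_union, Finset.mem_sdiff]
    tauto
  have hT₁B : T₁ ⊆ B := Finset.subset_union_right
  set N := l1norm (restr h Txᶜ) with hN
  set Bn := l2norm (restr h B) with hBn
  set Hn := l2norm h with hHn
  have hN0 : 0 ≤ N := l1norm_nonneg _
  have hBn0 : 0 ≤ Bn := l2norm_nonneg _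
  have hHn0 : 0 ≤ Hn := l2norm_nonneg _
  have hl1c : N = l1norm (restr h T₁) + l1norm (restr h R) := l1norm_restr_split h hT₁sub
  have hl1T₁0 : 0 ≤ l1norm (restr h T₁) := l1norm_nonneg _
  -- lam
  obtain ⟨lam, hlam0, hlamR, hlam1, hlam2⟩ :
      ∃ lam : ℝ, 0 ≤ lam ∧ (∀ i ∈ R, |h i| ≤ lam) ∧
        Tt * lam ≤ l1norm (restr h T₁) / Tt ∧ Tt * lam ≤ l2norm (restr h T₁) := by
    rcases le_or_gt ks Txᶜ.card with hcase | hcase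
    · have hT₁c : T₁.card = ks := by rw [hT₁card, min_eq_left hcase]
      have hT₁ne : T₁.Nonempty := by rw [← Finset.card_pos, hT₁c]; exact hks
      obtain ⟨i₀, hi₀, hi₀min⟩ := Finset.exists_min_image T₁ (fun i => |h i|) hT₁ne
      refine ⟨|h i₀|, abs_nonneg _, fun i hi => hT₁max i₀ hi₀ i hi, ?_, ?_⟩
      · rw [le_div_iff₀ hTt0]
        have hsum : (ks : ℝ) * |h i₀| ≤ l1norm (restr h T₁) := by
          rw [l1norm_restr]
          calc (ks : ℝ) * |h i₀| = ∑ _i ∈ T₁, |h i₀| := by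
                rw [Finset.sum_const, nsmul_eq_mul, hT₁c]
            _ ≤ ∑ i ∈ T₁, |h i| := Finset.sum_le_sum fun i hi => hi₀min i hi
        calc Tt * |h i₀| * Tt = (ks : ℝ) * |h i₀| := by
              rw [hTt, mul_comm (Real.sqrt _) (|h i₀|), mul_assoc,
                Real.mul_self_sqrt (Nat.cast_nonneg _), mul_comm]
          _ ≤ l1norm (restr h T₁) := hsum
      · have hsum : (ks : ℝ) * |h i₀| ^ 2 ≤ ∑ i ∈ T₁, (h i) ^ 2 := by
          calc (ks : ℝ) * |h i₀| ^ 2 = ∑ _i ∈ T₁, |h i₀| ^ 2 := by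
                  rw [Finset.sum_const, nsmul_eq_mul, hT₁c]
            _ ≤ ∑ i ∈ T₁, (h i) ^ 2 := by
              refine Finset.sum_le_sum fun i hi => ?_
              calc |h i₀| ^ 2 ≤ |h i| ^ 2 := by
                    exact pow_le_pow_left₀ (abs_nonneg _) (hi₀min i hi) 2
                _ = (h i) ^ 2 := sq_abs _
        calc Tt * |h i₀| = Real.sqrt ((ks : ℝ) * |h i₀| ^ 2) := by
              rw [Real.sqrt_mul (Nat.cast_nonneg _), Real.sqrt_sq (abs_nonneg _), hTt]
          _ ≤ Real.sqrt (∑ i ∈ T₁, (h i) ^ 2) := Real.sqrt_le_sqrt hsum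
          _ = l2norm (restr h T₁) := (l2norm_restr_eq h T₁).symm
    · have hT₁eq : T₁ = Txᶜ := by
        apply Finset.eq_of_subset_of_card_le hT₁sub
        rw [hT₁card, min_eq_right hcase.le]
      have hRempty : R = ∅ := by rw [hRdef, hT₁eq, Finset.sdiff_self]
      refine ⟨0, le_refl _, fun i hi => by rw [hRempty] at hi; simp at hi, ?_, ?_⟩
      · rw [mul_zero]
        exact div_nonneg hl1T₁0 hTt0.le
      · rw [mul_zero]
        exact l2norm_nonneg _
  -- (IV) tail bound
  have hARle : l1norm (A.mulVec (restr h R)) ≤ (1 + δub) * (N / Tt) := by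
    have htail := tail_bound A δub ks hks hδub hRIPub h R.card R le_rfl lam hlam0 hlamR
    rw [← hTt] at htail
    refine le_trans htail (mul_le_mul_of_nonneg_left ?_ (by linarith))
    rw [hl1c, add_div]
    linarith only [hlam1]
  -- (V) RIP lower bound
  have hdecomp : h = restr h B + restr h R := by
    conv_lhs => rw [← restr_univ h]
    rw [restr_split h (Finset.subset_univ B), ← Finset.compl_eq_univ_sdiff, hBc]
  have hc3 : (1 - δlb) * Bn ≤ 2 * η₁ + (1 + δub) * (N / Tt) := by
    have hsp : Sparse (ks + s) (restr h B) := by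
      apply sparse_restr
      calc B.card ≤ Tx.card + T₁.card := Finset.card_union_le _ _
        _ ≤ s + ks := by rw [hTcard]; omega
        _ = ks + s := by omega
    have hlow := hRIPlb (restr h B) hsp
    have hBR : restr h B = h - restr h R := eq_sub_iff_add_eq.2 hdecomp.symm
    have hAB : l1norm (A.mulVec (restr h B)) ≤
        l1norm (A.mulVec h) + l1norm (A.mulVec (restr h R)) := by
      rw [hBR, Matrix.mulVec_sub]
      exact l1norm_sub_le _ _
    calc (1 - δlb) * Bn ≤ l1norm (A.mulVec (restr h B)) := hlow
      _ ≤ l1norm (A.mulVec h) + l1norm (A.mulVec (restr h R)) := hAB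
      _ ≤ 2 * η₁ + (1 + δub) * (N / Tt) := add_le_add hAh hARle
  -- (VI) Hn ≤ Bn + N/(2 Tt)
  set c := N / (2 * Tt) with hcdef
  have hc0 : 0 ≤ c := div_nonneg hN0 (by linarith)
  have hNc : N = 2 * Tt * c := by rw [hcdef]; field_simp
  have hc2 : Hn ≤ Bn + c := by
    have hsq : Hn ^ 2 = Bn ^ 2 + (l2norm (restr h R)) ^ 2 := by
      rw [hHn, hBn, l2norm_sq, l2norm_sq_restr, l2norm_sq_restr,
        ← Finset.sum_add_sum_compl B (fun i => h i ^ 2), hBc]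
    have hRsq : (l2norm (restr h R)) ^ 2 ≤ lam * N := by
      rw [l2norm_sq_restr]
      calc ∑ i ∈ R, (h i) ^ 2 ≤ ∑ i ∈ R, lam * |h i| := by
            refine Finset.sum_le_sum fun i hi => ?_
            calc (h i) ^ 2 = |h i| * |h i| := by rw [← sq_abs]; ring
              _ ≤ lam * |h i| := mul_le_mul_of_nonneg_right (hlamR i hi) (abs_nonneg _)
        _ = lam * l1norm (restr h R) := by rw [l1norm_restr, Finset.mul_sum]
        _ ≤ lam * N := by
            apply mul_le_mul_of_nonneg_left _ hlam0
            linarith only [hl1c, hl1T₁0]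
    have hlamB : Tt * lam ≤ Bn := le_trans hlam2 (l2_restr_mono h hT₁B)
    have h5 : Hn ^ 2 ≤ (Bn + c) ^ 2 := by
      have q1 : lam * N = 2 * (Tt * lam) * c := by rw [hNc]; ring
      have q2 : 2 * (Tt * lam) * c ≤ 2 * Bn * c := by
        apply mul_le_mul_of_nonneg_right _ hc0
        linarith only [hlamB]
      linarith only [hsq, hRsq, q1, q2, sq_nonneg c]
    calc Hn = Real.sqrt (Hn ^ 2) := (Real.sqrt_sq hHn0).symm
      _ ≤ Real.sqrt ((Bn + c) ^ 2) := Real.sqrt_le_sqrt h5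
      _ = Bn + c := Real.sqrt_sq (by linarith)
  -- (VII) cone in terms of Bn
  have hTB : l1norm (restr h Tx) ≤ St * Bn := by
    calc l1norm (restr h Tx) ≤ Real.sqrt Tx.card * l2norm (restr h Tx) :=
          l1_le_sqrt_card_mul_l2 h Tx
      _ ≤ St * Bn := by
          rw [hTcard, ← hSt]
          exact mul_le_mul_of_nonneg_left (l2_restr_mono h Finset.subset_union_left) hSt0.le
  have hc1 : N ≤ St * Bn + ε + α * Hn := by
    calc N ≤ l1norm (restr h Tx) + ε + α * l2norm h := hcone
      _ ≤ St * Bn + ε + α * Hn := by rw [← hHn]; linarith only [hTB]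
  -- introduce q
  set q := ε / (Tt - α) with hqdef
  have hq0 : 0 ≤ q := div_nonneg hε0 hTtα0.le
  have hεq : ε = (Tt - α) * q := by rw [hqdef]; field_simp
  -- polynomial core inequalities
  have hc1' : 2 * Tt * c ≤ St * Bn + (Tt - α) * q + α * Hn := by
    rw [← hεq, ← hNc]; exact hc1
  have hd : (2 * Tt - α) * c ≤ (St + α) * Bn + (Tt - α) * q := by
    have m1 := mul_le_mul_of_nonneg_left hc2 hα0.le
    linarith only [hc1', m1]
  have hc3' : (1 - δlb) * Bn ≤ 2 * η₁ + 2 * (1 + δub) * c := by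
    have hdivc : N / Tt = 2 * c := by
      rw [hNc]; field_simp
    rw [hdivc] at hc3
    linarith only [hc3]
  have he1 : Kt * (St + α) ≤ 2 * Tt - α := by
    rw [httks]
    linarith only [hαk, hα0]
  have he2 : 2 * c * Kt ≤ q * Kt + 2 * Bn := by
    have key : (2 * Tt - α) * (2 * c * Kt) ≤ (2 * Tt - α) * (q * Kt + 2 * Bn) := by
      have p1 : 2 * Kt * ((2 * Tt - α) * c) ≤ 2 * Kt * ((St + α) * Bn + (Tt - α) * q) :=
        mul_le_mul_of_nonneg_left hd (by linarith)
      have p2 : 2 * Kt * ((St + α) * Bn) ≤ 2 * (2 * Tt - α) * Bn := by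
        have := mul_le_mul_of_nonneg_right he1 hBn0
        linarith only [this]
      have p3 : 2 * Kt * ((Tt - α) * q) ≤ (2 * Tt - α) * (q * Kt) := by
        have := mul_nonneg (mul_nonneg hKt0 hq0) hα0.le
        linarith only [this]
      linarith only [p1, p2, p3]
    exact le_of_mul_le_mul_left key h2Ttα0
  have hρBn : ρ * Bn ≤ 2 * η₁ + (1 + δub) * q := by
    have key : (ρ * Bn) * Kt ≤ (2 * η₁ + (1 + δub) * q) * Kt := by
      have p1 : (1 - δlb) * Bn * Kt ≤ (2 * η₁ + 2 * (1 + δub) * c) * Kt :=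
        mul_le_mul_of_nonneg_right hc3' hKt0
      have p2 : (1 + δub) * (2 * c * Kt) ≤ (1 + δub) * (q * Kt + 2 * Bn) :=
        mul_le_mul_of_nonneg_left he2 (by linarith : (0:ℝ) ≤ 1 + δub)
      rw [show (ρ * Bn) * Kt = (ρ * Kt) * Bn by ring, hρKt]
      linarith only [p1, p2]
    exact le_of_mul_le_mul_right key (by linarith)
  have hfinal : (2 * Tt - α) * Hn ≤ (2 * Kt + 1) * St * Bn + (Tt - α) * q := by
    have p1 : 2 * Tt * Hn ≤ 2 * Tt * (Bn + c) :=
      mul_le_mul_of_nonneg_left hc2 (by linarith)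
    have p2 : (2 * Kt + 1) * St = 2 * Tt + St := by rw [httks]; ring
    rw [p2]
    linarith only [p1, hc1']
  -- final assembly
  have hBnle : Bn ≤ (2 * η₁ + (1 + δub) * q) / ρ := by
    rw [le_div_iff₀ hρ0]
    linarith only [hρBn]
  have hHnle : Hn ≤ ((2 * Kt + 1) * St * ((2 * η₁ + (1 + δub) * q) / ρ) + (Tt - α) * q) /
      (2 * Tt - α) := by
    rw [le_div_iff₀ h2Ttα0]
    have hco : 0 ≤ (2 * Kt + 1) * St := by positivity
    have m := mul_le_mul_of_nonneg_left hBnle hco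
    linarith only [hfinal, m]
  calc Hn ≤ ((2 * Kt + 1) * St * ((2 * η₁ + (1 + δub) * q) / ρ) + (Tt - α) * q) /
      (2 * Tt - α) := hHnle
    _ = 2 * (2 * Kt + 1) * St / ((2 * Tt - α) * ρ) * η₁ +
        St / (2 * Tt - α) * ((2 * Kt + 1) * (1 + δub) * St / (ρ * (Tt - α)) + 1) *
        (ε / St) := by
        rw [hqdef]
        field_simp
        ring
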